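/- For a Boolean function f on F_2^n with maximum autocorrelation Δ_f = max_{y≠0} |Σ_{x} (-1)^{f(x)+f(x+y)}|, and for P_u defined as the probability that f(u_1)+f(u_2)+f(u_3)+f(u_4)=0 given u_1+u_2+u_3+u_4 = u (with u_1,u_2,u_3 uniform), one has min_{u ≠ 0} (P_0 − P_u) ≥ (1/2^{n+1})·(1 − Δ_f/2^n)^2. -/

import Mathlib

open Finset

/-- Inner product over F_2. -/
def ip {n : ℕ} (x y : Fin n → ZMod 2) : ZMod 2 := ∑ i, x i * y i

/-- (-1)^s for s ∈ F_2, as a rational number. -/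
def sgn (s : ZMod 2) : ℚ := (-1) ^ s.val

/-- Walsh transform of f at y. -/
def walsh {n : ℕ} (f : (Fin n → ZMod 2) → ZMod 2) (y : Fin n → ZMod 2) : ℚ :=
  ∑ z, sgn (f z + ip z y)

/-- Autocorrelation coefficient of f at y. -/
def acorr {n : ℕ} (f : (Fin n → ZMod 2) → ZMod 2) (y : Fin n → ZMod 2) : ℚ :=
  ∑ x, sgn (f x + f (x + y))

/-- P_u : probability that f(u₁)+f(u₂)+f(u₃)+f(u₄)=0 when u₁+u₂+u₃+u₄ = u,
with (u₁,u₂,u₃) uniform in (F_2^n)^3 and u₄ = u + u₁ + u₂ + u₃. -/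
def probP {n : ℕ} (f : (Fin n → ZMod 2) → ZMod 2) (u : Fin n → ZMod 2) : ℚ :=
  ((univ.filter (fun t : (Fin n → ZMod 2) × (Fin n → ZMod 2) × (Fin n → ZMod 2) =>
      f t.1 + f t.2.1 + f t.2.2 + f (t.1 + t.2.1 + t.2.2 + u) = 0)).card : ℚ) / 2 ^ (3 * n)

/-- f is balanced: it takes the value 0 on exactly 2^(n-1) inputs. -/
def IsBalancedBF {n : ℕ} (f : (Fin n → ZMod 2) → ZMod 2) : Prop :=
  (univ.filter (fun x : Fin n → ZMod 2 => f x = 0)).card = 2 ^ (n - 1)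

/-! ### Auxiliary lemmas -/

lemma zmod2_val_one : ZMod.val (1 : ZMod 2) = 1 := rfl
lemma zmod2_val_add_one_one : ZMod.val ((1 : ZMod 2) + 1) = 0 := rfl

lemma sgn_add' : ∀ a b : ZMod 2, sgn (a + b) = sgn a * sgn b := by
  intro a b; fin_cases a <;> fin_cases b <;>
    simp [sgn, ZMod.val] <;> decide

lemma sgn_zero' : sgn 0 = 1 := by simp [sgn]

lemma sgn_one' : sgn 1 = -1 := by simp [sgn, zmod2_val_one]

lemma abs_sgn : ∀ a : ZMod 2, |sgn a| = 1 := by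
  intro a; fin_cases a <;> simp [sgn, zmod2_val_one]

lemma zmod2_add_self : ∀ a : ZMod 2, a + a = 0 := by decide

lemma zmod2_ne_zero : ∀ a : ZMod 2, a ≠ 0 → a = 1 := by decide

lemma vec_add_self {n : ℕ} (x : Fin n → ZMod 2) : x + x = 0 :=
  funext fun i => zmod2_add_self (x i)

lemma card_V (n : ℕ) : Fintype.card (Fin n → ZMod 2) = 2 ^ n := by
  simp

lemma sum_sgn_count {α : Type*} [Fintype α] (g : α → ZMod 2) :
    ∑ x, sgn (g x) = 2 * ((univ.filter fun x => g x = 0).card : ℚ) - Fintype.card α := by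
  classical
  rw [← Finset.sum_filter_add_sum_filter_not univ (fun x => g x = 0)]
  have h1 : ∑ x ∈ univ.filter (fun x => g x = 0), sgn (g x)
      = ((univ.filter fun x => g x = 0).card : ℚ) := by
    rw [Finset.sum_congr rfl fun x hx => by
      rw [(Finset.mem_filter.mp hx).2, sgn_zero']]
    simp
  have h2 : ∑ x ∈ univ.filter (fun x => ¬ g x = 0), sgn (g x)
      = -(((univ.filter fun x => ¬ g x = 0).card : ℚ)) := by
    rw [Finset.sum_congr rfl fun x hx => by
      rw [zmod2_ne_zero _ (Finset.mem_filter.mp hx).2, sgn_one']]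
    simp
  have hc := Finset.card_filter_add_card_filter_not
    (s := (univ : Finset α)) (p := fun x => g x = 0)
  rw [h1, h2]
  rw [Finset.card_univ] at hc
  have : ((univ.filter fun x => g x = 0).card : ℚ)
      + ((univ.filter fun x => ¬ g x = 0).card : ℚ) = (Fintype.card α : ℚ) := by
    exact_mod_cast congrArg (Nat.cast : ℕ → ℚ) hc
  linarith

lemma probP_eq {n : ℕ} (f : (Fin n → ZMod 2) → ZMod 2) (u : Fin n → ZMod 2) :
    probP f u = ((2 ^ (3 * n) : ℚ)
      + ∑ t : (Fin n → ZMod 2) × (Fin n → ZMod 2) × (Fin n → ZMod 2),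
          sgn (f t.1 + f t.2.1 + f t.2.2 + f (t.1 + t.2.1 + t.2.2 + u))) / 2 ^ (3 * n + 1) := by
  have h := sum_sgn_count (fun t : (Fin n → ZMod 2) × (Fin n → ZMod 2) × (Fin n → ZMod 2) =>
    f t.1 + f t.2.1 + f t.2.2 + f (t.1 + t.2.1 + t.2.2 + u))
  have hcard : (Fintype.card
      ((Fin n → ZMod 2) × (Fin n → ZMod 2) × (Fin n → ZMod 2)) : ℚ) = 2 ^ (3 * n) := by
    rw [Fintype.card_prod, Fintype.card_prod, card_V]
    push_cast
    ring
  rw [probP, h, hcard]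
  have h2 : (2 : ℚ) ^ (3 * n + 1) = 2 * 2 ^ (3 * n) := by ring
  rw [h2]
  have hne : (2 : ℚ) ^ (3 * n) ≠ 0 := by positivity
  field_simp
  ring

lemma S_eq {n : ℕ} (f : (Fin n → ZMod 2) → ZMod 2) (u : Fin n → ZMod 2) :
    ∑ t : (Fin n → ZMod 2) × (Fin n → ZMod 2) × (Fin n → ZMod 2),
        sgn (f t.1 + f t.2.1 + f t.2.2 + f (t.1 + t.2.1 + t.2.2 + u))
      = ∑ a, acorr f a * acorr f (a + u) := by
  have h0 : ∀ a x z : Fin n → ZMod 2,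
      sgn (f x + f (x + a)) * sgn (f z + f (z + (a + u)))
        = sgn (f x + f (x + a) + f z + f (x + (x + a) + z + u)) := by
    intro a x z
    rw [show x + (x + a) + z + u = z + (a + u) + (x + x) from by abel,
      vec_add_self, add_zero]
    simp only [sgn_add']
    ring
  rw [Fintype.sum_prod_type]
  simp only [Fintype.sum_prod_type]
  calc (∑ x : Fin n → ZMod 2, ∑ y : Fin n → ZMod 2, ∑ z : Fin n → ZMod 2,
          sgn (f x + f y + f z + f (x + y + z + u)))
      = ∑ x : Fin n → ZMod 2, ∑ a : Fin n → ZMod 2, ∑ z : Fin n → ZMod 2,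
          sgn (f x + f (x + a) + f z + f (x + (x + a) + z + u)) := by
        refine Finset.sum_congr rfl fun x _ => ?_
        exact (Fintype.sum_equiv (Equiv.addLeft x) _ _ fun a => rfl).symm
    _ = ∑ a : Fin n → ZMod 2, ∑ x : Fin n → ZMod 2, ∑ z : Fin n → ZMod 2,
          sgn (f x + f (x + a) + f z + f (x + (x + a) + z + u)) := Finset.sum_comm
    _ = ∑ a, acorr f a * acorr f (a + u) := by
        refine Finset.sum_congr rfl fun a _ => ?_
        rw [acorr, acorr, Finset.sum_mul_sum]
        exact Finset.sum_congr rfl fun x _ =>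
          Finset.sum_congr rfl fun z _ => (h0 a x z).symm

lemma shift_sum {n : ℕ} (F : (Fin n → ZMod 2) → ℚ) (u : Fin n → ZMod 2) :
    ∑ a, F (a + u) = ∑ a, F a :=
  Fintype.sum_equiv (Equiv.addRight u) _ _ fun a => rfl

lemma acorr_zero {n : ℕ} (f : (Fin n → ZMod 2) → ZMod 2) : acorr f 0 = 2 ^ n := by
  rw [acorr, Finset.sum_congr rfl fun x _ => by
    rw [add_zero, zmod2_add_self (f x), sgn_zero']]
  simp [Finset.card_univ, card_V]

theorem probP_gap_lower_bound {n : ℕ} (f : (Fin n → ZMod 2) → ZMod 2)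
    (Δ : ℚ) (hΔ : IsGreatest {a : ℚ | ∃ y : Fin n → ZMod 2, y ≠ 0 ∧ a = |acorr f y|} Δ) :
    ∀ u : Fin n → ZMod 2, u ≠ 0 →
      probP f 0 - probP f u ≥ (1 / 2 ^ (n + 1)) * (1 - Δ / 2 ^ n) ^ 2 := by
  intro u hu
  set r : (Fin n → ZMod 2) → ℚ := acorr f with hr
  -- basic bounds
  have hΔub : Δ ≤ 2 ^ n := by
    obtain ⟨y, hy, hΔe⟩ := hΔ.1
    rw [hΔe]
    calc |acorr f y| ≤ ∑ x, |sgn (f x + f (x + y))| := Finset.abs_sum_le_sum_abs _ _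
      _ = ∑ _x : Fin n → ZMod 2, (1 : ℚ) := Finset.sum_congr rfl fun x _ => abs_sgn _
      _ = 2 ^ n := by simp [Finset.card_univ, card_V]
  have hru : r u ≤ Δ := le_trans (le_abs_self _) (hΔ.2 ⟨u, hu, rfl⟩)
  -- express the gap via autocorrelations
  have hgap : probP f 0 - probP f u
      = (∑ a, r a * r a - ∑ a, r a * r (a + u)) / 2 ^ (3 * n + 1) := by
    rw [probP_eq, probP_eq, S_eq, S_eq]
    have : ∀ a : Fin n → ZMod 2, acorr f a * acorr f (a + 0) = r a * r a := by
      intro a; rw [add_zero, hr]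
    rw [Finset.sum_congr rfl fun a _ => this a]
    ring
  -- quadratic manipulation
  have hsq : ∑ a, (r (a + u)) ^ 2 = ∑ a, (r a) ^ 2 := shift_sum (fun a => (r a) ^ 2) u
  have hexp : ∑ a, (r a - r (a + u)) ^ 2
      = ∑ a, (r a) ^ 2 - 2 * ∑ a, (r a * r (a + u)) + ∑ a, (r (a + u)) ^ 2 := by
    calc ∑ a, (r a - r (a + u)) ^ 2
        = ∑ a, ((r a) ^ 2 - 2 * (r a * r (a + u)) + (r (a + u)) ^ 2) :=
          Finset.sum_congr rfl fun a _ => by ring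
      _ = ∑ a, (r a) ^ 2 - 2 * ∑ a, (r a * r (a + u)) + ∑ a, (r (a + u)) ^ 2 := by
          rw [Finset.sum_add_distrib, Finset.sum_sub_distrib, ← Finset.mul_sum]
  have hhalf : ∑ a, r a * r a - ∑ a, r a * r (a + u)
      = (∑ a, (r a - r (a + u)) ^ 2) / 2 := by
    have h1 : ∑ a, r a * r a = ∑ a, (r a) ^ 2 :=
      Finset.sum_congr rfl fun a _ => (sq (r a)).symm
    rw [h1, hexp, hsq]
    ring
  -- lower bound the sum of squares by the terms a = 0 and a = u
  have hmem : (0 : Fin n → ZMod 2) ∉ ({u} : Finset (Fin n → ZMod 2)) := by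
    simp [Ne.symm hu]
  have hge : (r 0 - r u) ^ 2 + (r u - r 0) ^ 2 ≤ ∑ a, (r a - r (a + u)) ^ 2 := by
    have h2 := Finset.sum_le_sum_of_subset_of_nonneg
      (Finset.subset_univ ({0, u} : Finset (Fin n → ZMod 2)))
      (fun a _ _ => sq_nonneg (r a - r (a + u)))
    rw [show ({0, u} : Finset (Fin n → ZMod 2)) = insert 0 {u} from rfl,
      Finset.sum_insert hmem, Finset.sum_singleton, zero_add, vec_add_self u] at h2
    exact h2
  -- conclude
  have hr0 : r 0 = 2 ^ n := acorr_zero f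
  have hkey : (2 ^ n - Δ) ^ 2 ≤ (r 0 - r u) ^ 2 := by
    rw [hr0]
    have h1 : (0 : ℚ) ≤ 2 ^ n - Δ := by linarith
    have h2 : 2 ^ n - Δ ≤ 2 ^ n - r u := by linarith
    exact pow_le_pow_left₀ h1 h2 2
  have hmain : (2 ^ n - Δ) ^ 2 ≤ ∑ a, r a * r a - ∑ a, r a * r (a + u) := by
    rw [hhalf]
    nlinarith [hge, hkey]
  have hrhs : (1 / 2 ^ (n + 1)) * (1 - Δ / 2 ^ n) ^ 2
      = (2 ^ n - Δ) ^ 2 / 2 ^ (3 * n + 1) := by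
    have hne : (2 : ℚ) ^ n ≠ 0 := by positivity
    rw [show (1 : ℚ) - Δ / 2 ^ n = (2 ^ n - Δ) / 2 ^ n from by field_simp,
      div_pow, one_div, inv_mul_eq_div, div_div]
    congr 1
    ring
  rw [hgap, hrhs]
  gcongr
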